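/- If x, L are sequences/values such that a sequence (xₖ) satisfies strong Cesàro convergence to L with respect to weights (uₖ) along a subsequence κ (i.e., (1/a_u(n)) ∑_{k=0}^{n−1} uₖ|xₖ − L| → 0 along n ∈ κ, where a_u(n) = ∑_{k<n} uₖ and ∑ uₖ = ∞, uₖ ≥ 0), then xₖ → L in (u,κ)-density: there is a set K ⊆ ℕ with a_u(K ∩ [0,n−1])/a_u(n) → 0 along n ∈ κ such that xₖ → L for k ∉ K. -/

import Mathlib

open Filter

/-- Weighted strong Cesàro convergence along a subsequence `κ` implies convergence in
`(u,κ)`-density: there is a `(u,κ)`-small set `K` off which `xₖ → L`. -/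
theorem stmt_11 (u x : ℕ → ℝ) (L : ℝ) (κ : ℕ → ℕ)
    (hκ : Tendsto κ atTop atTop)
    (hu : ∀ k, 0 ≤ u k)
    (hdiv : Tendsto (fun n => ∑ k ∈ Finset.range n, u k) atTop atTop)
    (hsC : Tendsto (fun i =>
        (∑ k ∈ Finset.range (κ i), u k * |x k - L|) / ∑ k ∈ Finset.range (κ i), u k)
      atTop (nhds 0)) :
    ∃ K : Set ℕ,
      Tendsto (fun i =>
          (∑ k ∈ Finset.range (κ i), Set.indicator K u k) / ∑ k ∈ Finset.range (κ i), u k)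
        atTop (nhds 0) ∧
      ∀ ε : ℝ, 0 < ε → ∃ N, ∀ k, N ≤ k → k ∉ K → |x k - L| < ε := by
  set S : ℕ → ℝ := fun i =>
    (∑ k ∈ Finset.range (κ i), u k * |x k - L|) / ∑ k ∈ Finset.range (κ i), u k with hSdef
  have hS0 : ∀ i, 0 ≤ S i := fun i =>
    div_nonneg (Finset.sum_nonneg fun k _ => mul_nonneg (hu k) (abs_nonneg _))
      (Finset.sum_nonneg fun k _ => hu k)
  have hSbdd : BddAbove (Set.range S) := hsC.bddAbove_range
  have hne : ∀ k : ℕ, (S '' {j | k < κ j}).Nonempty := by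
    intro k
    obtain ⟨j, hj⟩ := (hκ.eventually_gt_atTop k).exists
    exact ⟨S j, j, hj, rfl⟩
  have hbdd : ∀ k : ℕ, BddAbove (S '' {j | k < κ j}) := fun k =>
    hSbdd.mono (Set.image_subset_range S _)
  set h : ℕ → ℝ := fun k => sSup (S '' {j | k < κ j}) with hhdef
  have hle : ∀ i k, k < κ i → S i ≤ h k := fun i k hk =>
    le_csSup (hbdd k) ⟨i, hk, rfl⟩
  have h0 : ∀ k, 0 ≤ h k := by
    intro k
    obtain ⟨j, hj⟩ := (hκ.eventually_gt_atTop k).exists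
    exact (hS0 j).trans (hle j k hj)
  -- `h` tends to 0
  have hh0 : Tendsto h atTop (nhds 0) := by
    rw [Metric.tendsto_atTop]
    intro ε hε
    obtain ⟨N, hN⟩ := Metric.tendsto_atTop.1 hsC (ε / 2) (by linarith)
    refine ⟨(Finset.range N).sup κ, fun k hk => ?_⟩
    have hsup : h k ≤ ε / 2 := by
      apply csSup_le (hne k)
      rintro y ⟨j, hj, rfl⟩
      have hjN : N ≤ j := by
        by_contra hjlt
        push_neg at hjlt
        have : κ j ≤ (Finset.range N).sup κ :=
          Finset.le_sup (Finset.mem_range.2 hjlt)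
        exact absurd hj (not_lt.2 (this.trans hk))
      have := hN j hjN
      rw [Real.dist_eq, sub_zero] at this
      exact (le_abs_self _).trans this.le
    rw [Real.dist_eq, sub_zero, abs_of_nonneg (h0 k)]
    linarith
  refine ⟨{k | Real.sqrt (h k) < |x k - L|}, ?_, ?_⟩
  · -- smallness of K
    have hφ : Tendsto (fun i => Real.sqrt (S i)) atTop (nhds 0) := by
      have := (Real.continuous_sqrt.tendsto 0).comp hsC
      simpa [Function.comp_def, Real.sqrt_zero] using this
    refine tendsto_of_tendsto_of_tendsto_of_le_of_le tendsto_const_nhds hφ ?_ ?_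
    · intro i
      exact div_nonneg
        (Finset.sum_nonneg fun k _ => Set.indicator_apply_nonneg fun _ => hu k)
        (Finset.sum_nonneg fun k _ => hu k)
    · intro i
      set K : Set ℕ := {k | Real.sqrt (h k) < |x k - L|} with hK
      set Ai : ℝ := ∑ k ∈ Finset.range (κ i), Set.indicator K u k with hAi
      set Bi : ℝ := ∑ k ∈ Finset.range (κ i), u k with hBi
      set Ci : ℝ := ∑ k ∈ Finset.range (κ i), u k * |x k - L| with hCi
      have hBnn : (0 : ℝ) ≤ Bi := Finset.sum_nonneg fun k _ => hu k
      have key : Real.sqrt (S i) * Ai ≤ Ci := by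
        rw [hAi, hCi, Finset.mul_sum]
        apply Finset.sum_le_sum
        intro k hk
        by_cases hkK : k ∈ K
        · rw [Set.indicator_of_mem hkK]
          have h1 : Real.sqrt (S i) ≤ Real.sqrt (h k) :=
            Real.sqrt_le_sqrt (hle i k (Finset.mem_range.1 hk))
          have h2 : Real.sqrt (h k) ≤ |x k - L| := le_of_lt hkK
          rw [mul_comm (Real.sqrt (S i)) (u k)]
          exact mul_le_mul_of_nonneg_left (h1.trans h2) (hu k)
        · rw [Set.indicator_of_notMem hkK, mul_zero]
          exact mul_nonneg (hu k) (abs_nonneg _)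
      rcases hBnn.eq_or_lt with hB | hB
      · -- Bi = 0
        have hA : Ai = 0 := by
          rw [hAi]
          apply Finset.sum_eq_zero
          intro k hk
          have huk : u k = 0 :=
            (Finset.sum_eq_zero_iff_of_nonneg fun k _ => hu k).1 hB.symm k hk
          by_cases hkK : k ∈ K
          · rw [Set.indicator_of_mem hkK, huk]
          · rw [Set.indicator_of_notMem hkK]
        simp only [← hAi, ← hBi] at *
        rw [hA, zero_div]
        exact Real.sqrt_nonneg _
      · rw [div_le_iff₀ hB]
        have hCB : Ci = S i * Bi := by
          rw [hSdef]
          simp only [← hCi, ← hBi]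
          field_simp
        rcases (hS0 i).eq_or_lt with hS | hS
        · -- S i = 0
          have hC : Ci = 0 := by rw [hCB, ← hS, zero_mul]
          have hterm : ∀ k ∈ Finset.range (κ i), u k * |x k - L| = 0 :=
            (Finset.sum_eq_zero_iff_of_nonneg fun k _ =>
              mul_nonneg (hu k) (abs_nonneg _)).1 hC
          have hA : Ai = 0 := by
            rw [hAi]
            apply Finset.sum_eq_zero
            intro k hk
            by_cases hkK : k ∈ K
            · have hx : 0 < |x k - L| := lt_of_le_of_lt (Real.sqrt_nonneg _) hkK
              have huk : u k = 0 := by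
                rcases mul_eq_zero.1 (hterm k hk) with h' | h'
                · exact h'
                · exact absurd h' hx.ne'
              rw [Set.indicator_of_mem hkK, huk]
            · rw [Set.indicator_of_notMem hkK]
          rw [← hAi, hA]
          positivity
        · have hsq : 0 < Real.sqrt (S i) := Real.sqrt_pos.2 hS
          have hmain : Real.sqrt (S i) * Ai ≤ Real.sqrt (S i) * (Real.sqrt (S i) * Bi) := by
            calc Real.sqrt (S i) * Ai ≤ Ci := key
              _ = S i * Bi := hCB
              _ = Real.sqrt (S i) * (Real.sqrt (S i) * Bi) := by
                  rw [← mul_assoc, Real.mul_self_sqrt (hS0 i)]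
          have := le_of_mul_le_mul_left hmain hsq
          rw [← hAi]
          exact this
  · -- convergence off K
    intro ε hε
    have hsqrt : Tendsto (fun k => Real.sqrt (h k)) atTop (nhds 0) := by
      have := (Real.continuous_sqrt.tendsto 0).comp hh0
      simpa [Function.comp_def, Real.sqrt_zero] using this
    obtain ⟨N, hN⟩ := Metric.tendsto_atTop.1 hsqrt ε hε
    refine ⟨N, fun k hk hkK => ?_⟩
    have h1 : |x k - L| ≤ Real.sqrt (h k) := not_lt.1 hkK
    have h2 := hN k hk
    rw [Real.dist_eq, sub_zero, abs_of_nonneg (Real.sqrt_nonneg _)] at h2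
    exact lt_of_le_of_lt h1 h2
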